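/- For every δ > 0, the set G(δ) is the graph of a Λ-Lipschitz function over B: there exists a function g : B → ℝ which is Λ-Lipschitz and satisfies G(δ) = {(x, g(x)) : x ∈ B}. -/

import Mathlib

open Metric Set

noncomputable section

/-- `ℝ^n` with the Euclidean norm. -/
abbrev Euc (n : ℕ) := EuclideanSpace ℝ (Fin n)

/-- The space `ℝ^{d-1} × ℝ` equipped with the Euclidean (l²) product distance. -/
abbrev Pt (d : ℕ) := WithLp 2 (Euc (d - 1) × ℝ)

/-- The point `(x, y) ∈ ℝ^{d-1} × ℝ`. -/
def toPt (d : ℕ) (x : Euc (d - 1)) (y : ℝ) : Pt d :=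
  (WithLp.equiv 2 (Euc (d - 1) × ℝ)).symm (x, y)

/-- First (horizontal) component of a point of `ℝ^{d-1} × ℝ`. -/
def fstPt (d : ℕ) (p : Pt d) : Euc (d - 1) := (WithLp.equiv 2 (Euc (d - 1) × ℝ) p).1

/-- Second (vertical) component of a point of `ℝ^{d-1} × ℝ`. -/
def sndPt (d : ℕ) (p : Pt d) : ℝ := (WithLp.equiv 2 (Euc (d - 1) × ℝ) p).2

/-- `F̂`, the graph of `f` over the ball `B̂` of radius `R`. -/
def graphF (d : ℕ) (f : Euc (d - 1) → ℝ) (R : ℝ) : Set (Pt d) :=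
  (fun x => toPt d x (f x)) '' Metric.ball (0 : Euc (d - 1)) R

/-- `G(δ)`: points above the graph, over the smaller ball `B` of radius `r`, whose
Euclidean distance to the graph `F̂` equals `δ`. -/
def GSet (d : ℕ) (f : Euc (d - 1) → ℝ) (R r δ : ℝ) : Set (Pt d) :=
  { p | fstPt d p ∈ Metric.ball (0 : Euc (d - 1)) r ∧ f (fstPt d p) < sndPt d p ∧
        Metric.infDist p (graphF d f R) = δ }

/-- For every `δ > 0`, the set `G(δ)` is the graph over `B` of a
`Λ`-Lipschitz function `g : B → ℝ`. -/

lemma key1 (Λ δ s : ℝ) (hΛ : 0 ≤ Λ) (hδ : 0 < δ) (h0 : 0 ≤ s)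
    (h : s ≤ Λ * δ / Real.sqrt (1 + Λ^2)) : s ≤ Λ * Real.sqrt (δ^2 - s^2) := by
  have hsq : Real.sqrt (1+Λ^2) > 0 := Real.sqrt_pos.2 (by positivity)
  have hw2 : (Real.sqrt (1+Λ^2))^2 = 1+Λ^2 := Real.sq_sqrt (by positivity)
  have h1 : s * Real.sqrt (1+Λ^2) ≤ Λ * δ := by
    rw [← le_div_iff₀ hsq]; exact h
  have h3 : s^2 ≤ Λ^2 * (δ^2 - s^2) := by
    nlinarith [mul_le_mul h1 h1 (by positivity) (by positivity)]
  calc s = Real.sqrt (s^2) := (Real.sqrt_sq h0).symm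
    _ ≤ Real.sqrt (Λ^2 * (δ^2 - s^2)) := Real.sqrt_le_sqrt h3
    _ = Λ * Real.sqrt (δ^2 - s^2) := by
        rw [Real.sqrt_mul (by positivity), Real.sqrt_sq hΛ]

lemma key2 (Λ δ s : ℝ) (hΛ : 0 ≤ Λ) (hδ : 0 < δ) (hsd : s ≤ δ)
    (h : Λ * δ / Real.sqrt (1 + Λ^2) ≤ s) : Λ * Real.sqrt (δ^2 - s^2) ≤ s := by
  have h0 : 0 ≤ s := le_trans (by positivity) h
  have hsq : Real.sqrt (1+Λ^2) > 0 := Real.sqrt_pos.2 (by positivity)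
  have hw2 : (Real.sqrt (1+Λ^2))^2 = 1+Λ^2 := Real.sq_sqrt (by positivity)
  have h1 : Λ * δ ≤ s * Real.sqrt (1+Λ^2) := by
    rw [div_le_iff₀ hsq] at h; linarith
  have h3 : Λ^2 * (δ^2 - s^2) ≤ s^2 := by
    nlinarith [mul_le_mul h1 h1 (by positivity) (by positivity)]
  have h4 : 0 ≤ δ^2 - s^2 := by nlinarith
  calc Λ * Real.sqrt (δ^2 - s^2) = Real.sqrt (Λ^2 * (δ^2 - s^2)) := by
        rw [Real.sqrt_mul (by positivity), Real.sqrt_sq hΛ]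
    _ ≤ Real.sqrt (s^2) := Real.sqrt_le_sqrt h3
    _ = s := Real.sqrt_sq h0

lemma Lam_lt_sqrt (Λ : ℝ) (hΛ : 0 ≤ Λ) : Λ < Real.sqrt (1+Λ^2) := by
  have hw2 : (Real.sqrt (1+Λ^2))^2 = 1+Λ^2 := Real.sq_sqrt (by positivity)
  nlinarith [Real.sqrt_nonneg (1+Λ^2)]

lemma rho_lt (Λ δ : ℝ) (hΛ : 0 ≤ Λ) (hδ : 0 < δ) : Λ * δ / Real.sqrt (1 + Λ^2) < δ := by
  have hsq : Real.sqrt (1+Λ^2) > 0 := Real.sqrt_pos.2 (by positivity)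
  rw [div_lt_iff₀ hsq]
  nlinarith [Lam_lt_sqrt Λ hΛ]

lemma rho_le (Λ δ : ℝ) (hΛ : 0 ≤ Λ) (hδ : 0 < δ) : Λ * δ / Real.sqrt (1 + Λ^2) ≤ δ :=
  (rho_lt Λ δ hΛ hδ).le

lemma rho_nonneg (Λ δ : ℝ) (hΛ : 0 ≤ Λ) (hδ : 0 < δ) : 0 ≤ Λ * δ / Real.sqrt (1 + Λ^2) := by
  positivity

lemma flat (Λ δ s s' : ℝ) (hΛ : 0 ≤ Λ) (hδ : 0 < δ) (h0 : 0 ≤ s) (hss : s ≤ s')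
    (h' : s' ≤ Λ * δ / Real.sqrt (1 + Λ^2)) :
    Real.sqrt (δ^2 - s^2) - Real.sqrt (δ^2 - s'^2) ≤ Λ * (s' - s) := by
  have h0' : 0 ≤ s' := le_trans h0 hss
  have hρδ := rho_le Λ δ hΛ hδ
  have hsδ : s ≤ δ := le_trans hss (le_trans h' hρδ)
  have hs'δ : s' ≤ δ := le_trans h' hρδ
  have k1 := key1 Λ δ s hΛ hδ h0 (le_trans hss h')
  have k1' := key1 Λ δ s' hΛ hδ h0' h'
  set u := Real.sqrt (δ^2 - s^2) with hu
  set v := Real.sqrt (δ^2 - s'^2) with hv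
  have hu0 : 0 ≤ u := Real.sqrt_nonneg _
  have hv0 : 0 ≤ v := Real.sqrt_nonneg _
  have hu2 : u^2 = δ^2 - s^2 := Real.sq_sqrt (by nlinarith)
  have hv2 : v^2 = δ^2 - s'^2 := Real.sq_sqrt (by nlinarith)
  have hs'ρ : s' < δ := lt_of_le_of_lt h' (rho_lt Λ δ hΛ hδ)
  have hv1 : 0 < v := Real.sqrt_pos.2 (by nlinarith)
  have huv : 0 < u + v := by linarith
  nlinarith [mul_le_mul k1 k1' (by nlinarith) (by positivity)]

lemma steep (Λ δ s s' : ℝ) (hΛ : 0 ≤ Λ) (hδ : 0 < δ) (hss : s ≤ s') (hs'δ : s' ≤ δ)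
    (h : Λ * δ / Real.sqrt (1 + Λ^2) ≤ s) :
    Λ * (s' - s) ≤ Real.sqrt (δ^2 - s^2) - Real.sqrt (δ^2 - s'^2) := by
  have h0 : 0 ≤ s := le_trans (rho_nonneg Λ δ hΛ hδ) h
  have hsδ : s ≤ δ := le_trans hss hs'δ
  have k2 := key2 Λ δ s hΛ hδ hsδ h
  have k2' := key2 Λ δ s' hΛ hδ hs'δ (le_trans h hss)
  set u := Real.sqrt (δ^2 - s^2) with hu
  set v := Real.sqrt (δ^2 - s'^2) with hv
  have hu0 : 0 ≤ u := Real.sqrt_nonneg _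
  have hv0 : 0 ≤ v := Real.sqrt_nonneg _
  have hu2 : u^2 = δ^2 - s^2 := Real.sq_sqrt (by nlinarith)
  have hv2 : v^2 = δ^2 - s'^2 := Real.sq_sqrt (by nlinarith)
  rcases eq_or_lt_of_le (show (0:ℝ) ≤ u + v by linarith) with h | h
  · have hu' : u = 0 := by linarith
    have hv' : v = 0 := by linarith
    have e1 : s = δ := by nlinarith
    have e2 : s' = δ := by nlinarith
    rw [hu', hv', e1, e2]; simp
  · nlinarith [mul_le_mul k2 k2' (by positivity) h0]

def mk2 (n : ℕ) (x : Euc n) (y : ℝ) : WithLp 2 (Euc n × ℝ) :=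
  (WithLp.equiv 2 (Euc n × ℝ)).symm (x, y)

lemma dist_mk2 (n : ℕ) (x x' : Euc n) (y y' : ℝ) :
    dist (mk2 n x y) (mk2 n x' y') = Real.sqrt (‖x - x'‖ ^ 2 + (y - y') ^ 2) := by
  rw [WithLp.prod_dist_eq_of_L2]
  simp [mk2, dist_eq_norm]

def Efun (n : ℕ) (δ : ℝ) (f' : Euc n → ℝ) (x z : Euc n) : ℝ :=
  f' z + Real.sqrt (δ^2 - ‖x - z‖^2)

def Kset (n : ℕ) (R δ : ℝ) (x : Euc n) : Set (Euc n) :=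
  closedBall (0 : Euc n) R ∩ closedBall x δ

def gfun (n : ℕ) (R δ : ℝ) (f' : Euc n → ℝ) (x : Euc n) : ℝ :=
  sSup (Efun n δ f' x '' Kset n R δ x)

def GraphL (n : ℕ) (R : ℝ) (f' : Euc n → ℝ) : Set (WithLp 2 (Euc n × ℝ)) :=
  (fun z => mk2 n z (f' z)) '' closedBall (0 : Euc n) R

lemma exists_max (n : ℕ) (R δ : ℝ) (hδ : 0 ≤ δ) (f' : Euc n → ℝ) (hc : Continuous f')
    (x : Euc n) (hx : x ∈ closedBall (0 : Euc n) R) :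
    ∃ z ∈ Kset n R δ x, gfun n R δ f' x = Efun n δ f' x z ∧
      ∀ w ∈ Kset n R δ x, Efun n δ f' x w ≤ Efun n δ f' x z := by
  have hK : IsCompact (Kset n R δ x) :=
    (isCompact_closedBall (0 : Euc n) R).inter_right Metric.isClosed_closedBall
  have hne : (Kset n R δ x).Nonempty := ⟨x, hx, mem_closedBall_self hδ⟩
  have hcont : ContinuousOn (Efun n δ f' x) (Kset n R δ x) := by
    apply Continuous.continuousOn
    exact hc.add (Real.continuous_sqrt.comp (by continuity))
  obtain ⟨z, hz, hmax⟩ := hK.exists_isMaxOn hne hcont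
  refine ⟨z, hz, ?_, fun w hw => hmax hw⟩
  exact IsGreatest.csSup_eq ⟨mem_image_of_mem _ hz,
    fun y ⟨w, hw, hwy⟩ => hwy ▸ hmax hw⟩

lemma graphMap_lip (n : ℕ) (Λ : ℝ) (hΛ : 0 ≤ Λ) (f' : Euc n → ℝ)
    (hf' : LipschitzWith Λ.toNNReal f') :
    LipschitzWith (Real.sqrt (1+Λ^2)).toNNReal (fun z => mk2 n z (f' z)) := by
  apply LipschitzWith.of_dist_le_mul
  intro z w
  rw [dist_mk2, Real.coe_toNNReal _ (Real.sqrt_nonneg _)]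
  have hfd : |f' z - f' w| ≤ Λ * ‖z - w‖ := by
    have := hf'.dist_le_mul z w
    rwa [Real.dist_eq, Real.coe_toNNReal _ hΛ, dist_eq_norm] at this
  have h1 : (f' z - f' w)^2 ≤ Λ^2 * ‖z - w‖^2 := by
    nlinarith [abs_nonneg (f' z - f' w), sq_abs (f' z - f' w), norm_nonneg (z - w)]
  calc Real.sqrt (‖z - w‖^2 + (f' z - f' w)^2)
      ≤ Real.sqrt ((1+Λ^2) * ‖z - w‖^2) := Real.sqrt_le_sqrt (by nlinarith)
    _ = Real.sqrt (1+Λ^2) * ‖z - w‖ := by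
        rw [Real.sqrt_mul (by positivity), Real.sqrt_sq (norm_nonneg _)]
    _ = Real.sqrt (1+Λ^2) * dist z w := by rw [dist_eq_norm]

lemma graph_compact (n : ℕ) (Λ R : ℝ) (hΛ : 0 ≤ Λ) (f' : Euc n → ℝ)
    (hf' : LipschitzWith Λ.toNNReal f') : IsCompact (GraphL n R f') :=
  (isCompact_closedBall _ _).image (graphMap_lip n Λ hΛ f' hf').continuous

lemma graph_nonempty (n : ℕ) (R : ℝ) (hR : 0 ≤ R) (f' : Euc n → ℝ) :
    (GraphL n R f').Nonempty :=
  ⟨_, mem_image_of_mem _ (mem_closedBall_self hR)⟩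

lemma ivt_seg (n : ℕ) (f' : Euc n → ℝ) (hc : Continuous f') (x z : Euc n) (y : ℝ)
    (h1 : f' x < y) (h2 : y < f' z) :
    ∃ t : ℝ, t ∈ Ioo (0:ℝ) 1 ∧ f' (x + t • (z - x)) = y := by
  have hγ : ContinuousOn (fun t : ℝ => f' (x + t • (z - x))) (Icc 0 1) :=
    (hc.comp (by continuity)).continuousOn
  have hy : y ∈ Ioo ((fun t : ℝ => f' (x + t • (z - x))) 0)
      ((fun t : ℝ => f' (x + t • (z - x))) 1) := by
    simpa using ⟨h1, h2⟩
  obtain ⟨t, ht, hty⟩ := intermediate_value_Ioo (by norm_num : (0:ℝ) ≤ 1) hγ hy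
  exact ⟨t, ht, hty⟩

lemma seg_mem_closedBall (n : ℕ) (R : ℝ) (x z : Euc n) (t : ℝ)
    (hx : x ∈ closedBall (0:Euc n) R) (hz : z ∈ closedBall (0:Euc n) R)
    (h0 : 0 ≤ t) (h1 : t ≤ 1) : x + t • (z - x) ∈ closedBall (0:Euc n) R := by
  have := (convex_closedBall (0:Euc n) R) hx hz (by linarith : (0:ℝ) ≤ 1 - t) h0 (by ring)
  convert this using 1
  module

lemma norm_seg (n : ℕ) (x z : Euc n) (t : ℝ) (h0 : 0 ≤ t) :
    ‖x - (x + t • (z - x))‖ = t * ‖x - z‖ := by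
  rw [show x - (x + t • (z - x)) = t • (x - z) by module]
  rw [norm_smul, Real.norm_eq_abs, abs_of_nonneg h0]

lemma graph_subset_closure (n : ℕ) (Λ R : ℝ) (hΛ : 0 ≤ Λ) (hR : 0 < R)
    (f' : Euc n → ℝ) (hf' : LipschitzWith Λ.toNNReal f') :
    GraphL n R f' ⊆ closure ((fun z => mk2 n z (f' z)) '' ball (0 : Euc n) R) := by
  rintro q ⟨z, hz, rfl⟩
  rw [Metric.mem_closure_iff]
  intro ε hε
  set L : ℝ := ((Real.sqrt (1+Λ^2)).toNNReal : ℝ) with hL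
  have hL0 : 0 ≤ L := (Real.sqrt (1+Λ^2)).toNNReal.coe_nonneg
  set η : ℝ := min (1/2) (ε / (2 * (L + 1) * (R + 1))) with hη
  have hη0 : 0 < η := lt_min (by norm_num) (by positivity)
  have hη1 : η < 1 := lt_of_le_of_lt (min_le_left _ _) (by norm_num)
  set t : ℝ := 1 - η with ht
  have ht0 : 0 < t := by simp only [ht]; linarith
  have ht1 : t < 1 := by simp only [ht]; linarith
  have hmem : t • z ∈ ball (0 : Euc n) R := by
    rw [mem_ball, dist_zero_right, norm_smul, Real.norm_eq_abs, abs_of_pos ht0]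
    have hzR : ‖z‖ ≤ R := by simpa [dist_zero_right] using hz
    nlinarith
  refine ⟨mk2 n (t • z) (f' (t • z)), mem_image_of_mem _ hmem, ?_⟩
  have hdzw : dist z (t • z) ≤ η * R := by
    rw [dist_eq_norm, show z - t • z = η • z by rw [ht]; module,
      norm_smul, Real.norm_eq_abs, abs_of_pos hη0]
    have hzR : ‖z‖ ≤ R := by simpa [dist_zero_right] using hz
    nlinarith
  have hd := (graphMap_lip n Λ hΛ f' hf').dist_le_mul z (t • z)
  calc dist (mk2 n z (f' z)) (mk2 n (t • z) (f' (t • z))) ≤ L * dist z (t • z) := hd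
    _ ≤ L * (η * R) := by nlinarith [dist_nonneg (x := z) (y := t • z)]
    _ ≤ (L+1) * (R+1) * η := by nlinarith
    _ ≤ (L+1) * (R+1) * (ε / (2 * (L + 1) * (R + 1))) :=
        mul_le_mul_of_nonneg_left (by rw [hη]; exact min_le_right _ _) (by positivity)
    _ < ε := by
        rw [div_eq_mul_inv]
        have h1 : (2 * (L + 1) * (R + 1))⁻¹ * (2 * (L + 1) * (R + 1)) = 1 := by
          rw [inv_mul_cancel₀]; positivity
        nlinarith

lemma infDist_graphs (n : ℕ) (Λ R : ℝ) (hΛ : 0 ≤ Λ) (hR : 0 < R)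
    (f f' : Euc n → ℝ) (hf' : LipschitzWith Λ.toNNReal f')
    (hext : EqOn f f' (ball (0 : Euc n) R)) (p : WithLp 2 (Euc n × ℝ)) :
    Metric.infDist p ((fun z => mk2 n z (f z)) '' ball (0 : Euc n) R)
      = Metric.infDist p (GraphL n R f') := by
  have himg : (fun z => mk2 n z (f z)) '' ball (0 : Euc n) R
      = (fun z => mk2 n z (f' z)) '' ball (0 : Euc n) R :=
    image_congr (fun z hz => by rw [hext hz])
  rw [himg]
  have hne : ((fun z => mk2 n z (f' z)) '' ball (0 : Euc n) R).Nonempty :=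
    ⟨_, mem_image_of_mem _ (mem_ball_self hR)⟩
  apply le_antisymm
  · rw [← Metric.infDist_closure (s := (fun z => mk2 n z (f' z)) '' ball (0 : Euc n) R)]
    exact Metric.infDist_le_infDist_of_subset
      (graph_subset_closure n Λ R hΛ hR f' hf') (graph_nonempty n R hR.le f')
  · exact Metric.infDist_le_infDist_of_subset
      (image_mono ball_subset_closedBall) hne

lemma gfun_ge (n : ℕ) (R δ : ℝ) (hδ : 0 ≤ δ) (f' : Euc n → ℝ) (hc : Continuous f')
    (x : Euc n) (hx : x ∈ closedBall (0 : Euc n) R) : f' x + δ ≤ gfun n R δ f' x := by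
  obtain ⟨z, hz, hval, hub⟩ := exists_max n R δ hδ f' hc x hx
  have hxK : x ∈ Kset n R δ x := ⟨hx, mem_closedBall_self hδ⟩
  have : Efun n δ f' x x = f' x + δ := by
    simp [Efun, Real.sqrt_sq hδ]
  rw [hval, ← this]
  exact hub x hxK

lemma infDist_at_gfun (n : ℕ) (Λ R δ : ℝ) (hΛ : 0 ≤ Λ) (hR : 0 ≤ R) (hδ : 0 < δ)
    (f' : Euc n → ℝ) (hf' : LipschitzWith Λ.toNNReal f')
    (x : Euc n) (hx : x ∈ closedBall (0 : Euc n) R) :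
    Metric.infDist (mk2 n x (gfun n R δ f' x)) (GraphL n R f') = δ := by
  obtain ⟨z, ⟨hzC, hzδ⟩, hval, hub⟩ := exists_max n R δ hδ.le f' hf'.continuous x hx
  set g := gfun n R δ f' x with hg
  have hbδ : ‖x - z‖ ≤ δ := by
    rw [← dist_eq_norm, dist_comm]; exact mem_closedBall.1 hzδ
  have hb0 : (0:ℝ) ≤ δ^2 - ‖x - z‖^2 := by nlinarith [norm_nonneg (x - z)]
  have hgz : g - f' z = Real.sqrt (δ^2 - ‖x - z‖^2) := by
    rw [hval]; simp [Efun]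
  apply le_antisymm
  · have hmem : mk2 n z (f' z) ∈ GraphL n R f' := mem_image_of_mem _ hzC
    have hdist : dist (mk2 n x g) (mk2 n z (f' z)) = δ := by
      rw [dist_mk2, hgz, Real.sq_sqrt hb0]
      rw [show ‖x - z‖^2 + (δ^2 - ‖x-z‖^2) = δ^2 by ring, Real.sqrt_sq hδ.le]
    rw [← hdist]
    exact Metric.infDist_le_dist_of_mem hmem
  · obtain ⟨q, hq, hdq⟩ := (graph_compact n Λ R hΛ f' hf').exists_infDist_eq_dist
      (graph_nonempty n R hR f') (mk2 n x g)
    rw [hdq]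
    obtain ⟨w, hwC, rfl⟩ := hq
    rw [dist_mk2]
    rw [Real.le_sqrt hδ.le (by positivity)]
    by_cases hwδ : ‖x - w‖ ≤ δ
    · have hwK : w ∈ Kset n R δ x := ⟨hwC, by
        rw [mem_closedBall, dist_comm, dist_eq_norm]; exact hwδ⟩
      have h1 : f' w + Real.sqrt (δ^2 - ‖x - w‖^2) ≤ g := hval ▸ hub w hwK
      have h2 : (0:ℝ) ≤ δ^2 - ‖x - w‖^2 := by nlinarith [norm_nonneg (x - w)]
      have h3 : Real.sqrt (δ^2 - ‖x - w‖^2) ≤ g - f' w := by linarith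
      have h4 : δ^2 - ‖x - w‖^2 ≤ (g - f' w)^2 := by
        nlinarith [Real.sq_sqrt h2, Real.sqrt_nonneg (δ^2 - ‖x - w‖^2)]
      nlinarith
    · push_neg at hwδ
      nlinarith [sq_nonneg (g - f' w)]

set_option maxHeartbeats 1000000 in
lemma unique_level (n : ℕ) (Λ R r δ : ℝ) (hΛ : 0 ≤ Λ) (hr : 0 < r) (hrR : r < R)
    (hδ : 0 < δ) (f' : Euc n → ℝ) (hf' : LipschitzWith Λ.toNNReal f')
    (x : Euc n) (hx : x ∈ ball (0 : Euc n) r) (y : ℝ) (hy1 : f' x < y)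
    (hy2 : Metric.infDist (mk2 n x y) (GraphL n R f') = δ) :
    y = gfun n R δ f' x := by
  have hxC : x ∈ closedBall (0 : Euc n) R := by
    have := mem_ball.1 hx; exact mem_closedBall.2 (by linarith)
  set g := gfun n R δ f' x with hg
  set p := mk2 n x y with hp
  obtain ⟨zz, ⟨hzzC, hzzδ⟩, hval, hub⟩ := exists_max n R δ hδ.le f' hf'.continuous x hxC
  have hzzδ' : ‖x - zz‖ ≤ δ := by rw [← dist_eq_norm, dist_comm]; exact mem_closedBall.1 hzzδ
  have hzz0 : (0:ℝ) ≤ δ^2 - ‖x - zz‖^2 := by nlinarith [norm_nonneg (x - zz)]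
  have hgzz : g - f' zz = Real.sqrt (δ^2 - ‖x - zz‖^2) := by rw [hg, hval]; simp [Efun]
  -- Step (a) : y ≤ g
  obtain ⟨q, hq, hdq⟩ := (graph_compact n Λ R hΛ f' hf').exists_infDist_eq_dist
    (graph_nonempty n R (by linarith) f') p
  obtain ⟨z, hzC, rfl⟩ := hq
  have hdist : dist p (mk2 n z (f' z)) = δ := by rw [← hdq, hy2]
  have hdist2 : ‖x - z‖^2 + (y - f' z)^2 = δ^2 := by
    have h := hdist
    rw [dist_mk2] at h
    have := Real.sq_sqrt (show (0:ℝ) ≤ ‖x - z‖^2 + (y - f' z)^2 by positivity)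
    rw [h] at this; linarith
  have hyz : f' z ≤ y := by
    by_contra hcon
    push_neg at hcon
    obtain ⟨t, ⟨ht0, ht1⟩, htv⟩ := ivt_seg n f' hf'.continuous x z y hy1 hcon
    set w := x + t • (z - x) with hw
    have hwC : w ∈ closedBall (0 : Euc n) R := seg_mem_closedBall n R x z t hxC hzC ht0.le ht1.le
    have hwG : mk2 n w (f' w) ∈ GraphL n R f' := mem_image_of_mem _ hwC
    have hdw : dist p (mk2 n w (f' w)) = t * ‖x - z‖ := by
      rw [dist_mk2, htv, sub_self, hw, norm_seg n x z t ht0.le]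
      rw [show (t * ‖x - z‖)^2 + (0:ℝ)^2 = (t * ‖x - z‖)^2 by ring]
      exact Real.sqrt_sq (by positivity)
    have hxzlt : ‖x - z‖ < δ := by nlinarith [norm_nonneg (x - z)]
    have : Metric.infDist p (GraphL n R f') < δ := by
      calc Metric.infDist p (GraphL n R f') ≤ dist p (mk2 n w (f' w)) :=
            Metric.infDist_le_dist_of_mem hwG
        _ = t * ‖x - z‖ := hdw
        _ ≤ ‖x - z‖ := by nlinarith [norm_nonneg (x - z)]
        _ < δ := hxzlt
    linarith [hy2 ▸ this]
  have hzK : z ∈ Kset n R δ x := by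
    refine ⟨hzC, ?_⟩
    rw [mem_closedBall, dist_comm, dist_eq_norm]
    nlinarith [norm_nonneg (x - z), sq_nonneg (y - f' z)]
  have hyE : y = Efun n δ f' x z := by
    have h1 : Real.sqrt (δ^2 - ‖x - z‖^2) = y - f' z := by
      rw [show δ^2 - ‖x - z‖^2 = (y - f' z)^2 by linarith]
      exact Real.sqrt_sq (by linarith)
    rw [Efun, h1]; ring
  have hyg : y ≤ g := by rw [hyE, hg, hval]; exact hub z hzK
  -- Step (b) : g ≤ y
  rcases lt_or_ge y g with hlt | hge
  · exfalso
    rcases le_or_gt (f' zz) y with hc1 | hc2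
    · -- y ≥ f' zz : point (zz, f' zz) is at distance < δ from p
      have hgnn : (0:ℝ) ≤ g - f' zz := hgzz ▸ Real.sqrt_nonneg _
      have hsq : (g - f' zz)^2 = δ^2 - ‖x - zz‖^2 := by rw [hgzz]; exact Real.sq_sqrt hzz0
      have hdlt : dist p (mk2 n zz (f' zz)) < δ := by
        rw [dist_mk2, Real.sqrt_lt' hδ]
        nlinarith
      have : Metric.infDist p (GraphL n R f') < δ :=
        lt_of_le_of_lt (Metric.infDist_le_dist_of_mem (mem_image_of_mem _ hzzC)) hdlt
      linarith [hy2 ▸ this]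
    · -- y < f' zz : IVT gives a closer point
      obtain ⟨t, ⟨ht0, ht1⟩, htv⟩ := ivt_seg n f' hf'.continuous x zz y hy1 hc2
      set w := x + t • (zz - x) with hw
      have hwC : w ∈ closedBall (0 : Euc n) R :=
        seg_mem_closedBall n R x zz t hxC hzzC ht0.le ht1.le
      have hxzz : x ≠ zz := by
        intro hcon; rw [hcon] at hy1; linarith
      have hxzz0 : 0 < ‖x - zz‖ := by
        rw [norm_pos_iff]; exact sub_ne_zero_of_ne hxzz
      have hdw : dist p (mk2 n w (f' w)) = t * ‖x - zz‖ := by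
        rw [dist_mk2, htv, sub_self, hw, norm_seg n x zz t ht0.le]
        rw [show (t * ‖x - zz‖)^2 + (0:ℝ)^2 = (t * ‖x - zz‖)^2 by ring]
        exact Real.sqrt_sq (by positivity)
      have : Metric.infDist p (GraphL n R f') < δ := by
        calc Metric.infDist p (GraphL n R f') ≤ dist p (mk2 n w (f' w)) :=
              Metric.infDist_le_dist_of_mem (mem_image_of_mem _ hwC)
          _ = t * ‖x - zz‖ := hdw
          _ < ‖x - zz‖ := by nlinarith
          _ ≤ δ := hzzδ'
      linarith [hy2 ▸ this]
  · linarith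

set_option maxHeartbeats 1000000 in
lemma gfun_onesided (n : ℕ) (Λ R r δ : ℝ) (hΛ : 0 ≤ Λ) (hr : 0 < r) (hrR : r < R)
    (hδ : 0 < δ) (f' : Euc n → ℝ) (hf' : LipschitzWith Λ.toNNReal f')
    (x₁ x₂ : Euc n) (h₁ : x₁ ∈ ball (0 : Euc n) r) (h₂ : x₂ ∈ ball (0 : Euc n) r) :
    gfun n R δ f' x₂ - gfun n R δ f' x₁ ≤ Λ * ‖x₂ - x₁‖ := by
  have hx₁C : x₁ ∈ closedBall (0 : Euc n) R := by
    have := mem_ball.1 h₁; exact mem_closedBall.2 (by linarith)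
  have hx₂C : x₂ ∈ closedBall (0 : Euc n) R := by
    have := mem_ball.1 h₂; exact mem_closedBall.2 (by linarith)
  obtain ⟨zz, ⟨hzzC, hzzδ⟩, hval, _⟩ := exists_max n R δ hδ.le f' hf'.continuous x₂ hx₂C
  set ρ : ℝ := Λ * δ / Real.sqrt (1 + Λ^2) with hρ
  have hρ0 : 0 ≤ ρ := rho_nonneg Λ δ hΛ hδ
  have hρδ : ρ ≤ δ := rho_le Λ δ hΛ hδ
  set a : ℝ := ‖x₂ - x₁‖ with ha
  set b : ℝ := ‖x₂ - zz‖ with hb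
  set c : ℝ := ‖x₁ - zz‖ with hc
  have ha0 : 0 ≤ a := norm_nonneg _
  have hb0 : 0 ≤ b := norm_nonneg _
  have hc0 : 0 ≤ c := norm_nonneg _
  have hbδ : b ≤ δ := by rw [hb, ← dist_eq_norm, dist_comm]; exact mem_closedBall.1 hzzδ
  have hcab : c ≤ a + b := by
    rw [ha, hb, hc]
    calc ‖x₁ - zz‖ = ‖(x₂ - zz) - (x₂ - x₁)‖ := by rw [show (x₂-zz)-(x₂-x₁) = x₁ - zz by abel]
      _ ≤ ‖x₂ - zz‖ + ‖x₂ - x₁‖ := norm_sub_le _ _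
      _ = a + b := by rw [ha, hb]; ring
  -- construct the competitor point u for x₁
  have hexu : ∃ u : Euc n, u ∈ closedBall (0 : Euc n) R ∧ ‖x₁ - u‖ = min c ρ ∧
      f' zz - Λ * (c - min c ρ) ≤ f' u := by
    by_cases hcρ : c ≤ ρ
    · refine ⟨zz, hzzC, ?_, ?_⟩
      · rw [min_eq_left hcρ]
      · rw [min_eq_left hcρ]; simp
    · push_neg at hcρ
      have hcpos : 0 < c := lt_of_le_of_lt hρ0 hcρ
      set t : ℝ := ρ / c with htdef
      have ht0 : 0 ≤ t := by positivity
      have ht1 : t ≤ 1 := by rw [htdef, div_le_one hcpos]; linarith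
      refine ⟨x₁ + t • (zz - x₁), seg_mem_closedBall n R x₁ zz t hx₁C hzzC ht0 ht1, ?_, ?_⟩
      · rw [norm_seg n x₁ zz t ht0, ← hc, htdef, min_eq_right hcρ.le]
        field_simp
      · have hnorm : ‖(x₁ + t • (zz - x₁)) - zz‖ = (1 - t) * c := by
          rw [show (x₁ + t • (zz - x₁)) - zz = (1-t) • (x₁ - zz) by module]
          rw [norm_smul, Real.norm_eq_abs, abs_of_nonneg (by linarith), ← hc]
        have hlip : |f' (x₁ + t • (zz - x₁)) - f' zz| ≤ Λ * ((1-t) * c) := by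
          have := hf'.dist_le_mul (x₁ + t • (zz - x₁)) zz
          rwa [Real.dist_eq, Real.coe_toNNReal _ hΛ, dist_eq_norm, hnorm] at this
        have habs := abs_le.1 hlip
        have : (1 - t) * c = c - min c ρ := by
          rw [min_eq_right hcρ.le, htdef]; field_simp
        rw [this] at habs
        linarith [habs.1]
  obtain ⟨u, huC, hun, huf⟩ := hexu
  have humem : u ∈ Kset n R δ x₁ := by
    refine ⟨huC, ?_⟩
    rw [mem_closedBall, dist_comm, dist_eq_norm, hun]
    exact le_trans (min_le_right _ _) hρδ
  -- gfun x₁ ≥ Efun x₁ u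
  have hg1 : Efun n δ f' x₁ u ≤ gfun n R δ f' x₁ := by
    obtain ⟨z₁, hz₁, hval₁, hub₁⟩ := exists_max n R δ hδ.le f' hf'.continuous x₁ hx₁C
    rw [hval₁]; exact hub₁ u humem
  have hEu : f' zz - Λ * (c - min c ρ) + Real.sqrt (δ^2 - (min c ρ)^2) ≤ Efun n δ f' x₁ u := by
    rw [Efun, hun]
    have : (0:ℝ) ≤ Real.sqrt (δ^2 - (min c ρ)^2) := Real.sqrt_nonneg _
    linarith
  have hg2 : gfun n R δ f' x₂ = f' zz + Real.sqrt (δ^2 - b^2) := by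
    rw [hval, Efun, hb]
  -- key arithmetic
  have hkey : Real.sqrt (δ^2 - b^2) - Real.sqrt (δ^2 - (min c ρ)^2) + Λ * (c - min c ρ) ≤ Λ * a := by
    by_cases hcρ : c ≤ ρ
    · rw [min_eq_left hcρ]
      rcases le_or_gt c b with hcb | hbc
      · have : Real.sqrt (δ^2 - b^2) ≤ Real.sqrt (δ^2 - c^2) :=
          Real.sqrt_le_sqrt (by nlinarith)
        have : (0:ℝ) ≤ Λ * a := by positivity
        linarith
      · have hflat := flat Λ δ b c hΛ hδ hb0 hbc.le hcρ
        have : Λ * (c - b) ≤ Λ * a := by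
          apply mul_le_mul_of_nonneg_left _ hΛ; linarith
        linarith
    · push_neg at hcρ
      rw [min_eq_right hcρ.le]
      have h1 : Λ * (c - ρ) ≤ Λ * a + Λ * (b - ρ) := by
        have : Λ * (c - ρ) ≤ Λ * ((a + b) - ρ) := by
          apply mul_le_mul_of_nonneg_left _ hΛ; linarith
        linarith [this, mul_add Λ a (b - ρ)]
      rcases le_or_gt ρ b with hρb | hbρ
      · have hsteep := steep Λ δ ρ b hΛ hδ hρb hbδ (le_refl ρ)
        linarith
      · have hflat := flat Λ δ b ρ hΛ hδ hb0 hbρ.le (le_refl ρ)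
        linarith
  linarith

theorem level_set_is_lipschitz_graph
    (d : ℕ) (hd : 2 ≤ d) (Λ R r : ℝ) (hΛ : 0 ≤ Λ)
    (hr : 0 < r) (hrR : r < R)
    (f : Euc (d - 1) → ℝ)
    (hf : LipschitzOnWith Λ.toNNReal f (Metric.ball (0 : Euc (d - 1)) R))
    (δ : ℝ) (hδ : 0 < δ) :
    ∃ g : Euc (d - 1) → ℝ,
      LipschitzOnWith Λ.toNNReal g (Metric.ball (0 : Euc (d - 1)) r) ∧
      GSet d f R r δ = (fun x => toPt d x (g x)) '' Metric.ball (0 : Euc (d - 1)) r := by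
  obtain ⟨f', hf'lip, hext⟩ := hf.extend_real
  have hR : 0 < R := lt_trans hr hrR
  refine ⟨gfun (d-1) R δ f', ?_, ?_⟩
  · apply LipschitzOnWith.of_dist_le_mul
    intro x hx y hy
    rw [Real.dist_eq, Real.coe_toNNReal _ hΛ, dist_eq_norm]
    have h1 := gfun_onesided (d-1) Λ R r δ hΛ hr hrR hδ f' hf'lip y x hy hx
    have h2 := gfun_onesided (d-1) Λ R r δ hΛ hr hrR hδ f' hf'lip x y hx hy
    rw [abs_sub_le_iff]
    constructor
    · exact h1
    · rw [norm_sub_rev]; exact h2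
  · have hball : ball (0 : Euc (d-1)) r ⊆ ball (0 : Euc (d-1)) R :=
      ball_subset_ball (by linarith)
    have hgr : ∀ p : WithLp 2 (Euc (d-1) × ℝ),
        Metric.infDist p (graphF d f R) = Metric.infDist p (GraphL (d-1) R f') := by
      intro p
      have : graphF d f R = (fun z => mk2 (d-1) z (f z)) '' ball (0 : Euc (d-1)) R := rfl
      rw [this]
      exact infDist_graphs (d-1) Λ R hΛ hR f f' hf'lip hext p
    ext p
    simp only [GSet, mem_setOf_eq, mem_image]
    constructor
    · rintro ⟨hp1, hp2, hp3⟩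
      refine ⟨fstPt d p, hp1, ?_⟩
      have hxR : fstPt d p ∈ ball (0 : Euc (d-1)) R := hball hp1
      have hfeq : f (fstPt d p) = f' (fstPt d p) := hext hxR
      have hinf : Metric.infDist p (GraphL (d-1) R f') = δ := by rw [← hgr p]; exact hp3
      have hu := unique_level (d-1) Λ R r δ hΛ hr hrR hδ f' hf'lip (fstPt d p) hp1
        (sndPt d p) (by rw [← hfeq]; exact hp2) hinf
      show toPt d (fstPt d p) (gfun (d-1) R δ f' (fstPt d p)) = p
      rw [← hu]
      rfl
    · rintro ⟨x, hx, rfl⟩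
      have hxC : x ∈ closedBall (0 : Euc (d-1)) R := by
        have := mem_ball.1 hx; exact mem_closedBall.2 (by linarith)
      have hfeq : f x = f' x := hext (hball hx)
      refine ⟨hx, ?_, ?_⟩
      · show f x < gfun (d-1) R δ f' x
        rw [hfeq]
        have := gfun_ge (d-1) R δ hδ.le f' hf'lip.continuous x hxC
        linarith
      · show Metric.infDist (toPt d x (gfun (d-1) R δ f' x)) (graphF d f R) = δ
        rw [hgr]
        exact infDist_at_gfun (d-1) Λ R δ hΛ hR.le hδ f' hf'lip x hxC
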